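/- Let N ≥ 1, let V, Ṽ : ℝ^N → ℝ^N be continuous, and let X̃ : ℝ × ℝ^N → ℝ^N be a C¹ flow of Ṽ. Let T > 0 and let x : [0,T] → ℝ^N be continuously differentiable with x′(s) = V(x(s)) for all s ∈ [0,T]. Then for every t ∈ [0,T], x(t) − X̃(t, x(0)) = ∫₀ᵗ D_yX̃(t−s, x(s)) ( V(x(s)) − Ṽ(x(s)) ) ds. -/

import Mathlib

/-- The Stefanov–Uhlmann integral identity comparing a trajectory of `V`
with the flow of `Ṽ` having the same initial point. -/
theorem stmt_1 (N : ℕ) (hN : 1 ≤ N)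
    (V Vt : (Fin N → ℝ) → (Fin N → ℝ)) (hV : Continuous V) (hVt : Continuous Vt)
    (X : ℝ → (Fin N → ℝ) → (Fin N → ℝ))
    (hXC1 : ContDiff ℝ 1 (fun p : ℝ × (Fin N → ℝ) => X p.1 p.2))
    (hX0 : ∀ y, X 0 y = y)
    (hXode : ∀ t y, HasDerivAt (fun τ => X τ y) (Vt (X t y)) t)
    (hXgroup : ∀ s t : ℝ, ∀ y, X (t + s) y = X t (X s y))
    (T : ℝ) (hT : 0 < T)
    (x : ℝ → (Fin N → ℝ))
    (hx : ∀ s ∈ Set.Icc (0 : ℝ) T, HasDerivWithinAt x (V (x s)) (Set.Icc (0 : ℝ) T) s) :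
    ∀ t ∈ Set.Icc (0 : ℝ) T,
      x t - X t (x 0)
        = ∫ s in (0 : ℝ)..t, (fderiv ℝ (X (t - s)) (x s)) (V (x s) - Vt (x s)) := by
  intro t ht
  obtain ⟨ht0, htT⟩ := ht
  set F : ℝ × (Fin N → ℝ) → (Fin N → ℝ) := fun p => X p.1 p.2 with hFdef
  have hF : Differentiable ℝ F := hXC1.differentiable one_ne_zero
  have hFc : Continuous (fderiv ℝ F) := hXC1.continuous_fderiv one_ne_zero
  set C : (Fin N → ℝ) →L[ℝ] ℝ × (Fin N → ℝ) :=
    (0 : (Fin N → ℝ) →L[ℝ] ℝ).prod (ContinuousLinearMap.id ℝ (Fin N → ℝ)) with hCdef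
  have hCapp : ∀ b : Fin N → ℝ, C b = ((0 : ℝ), b) := fun b => rfl
  -- derivative of X τ in the space variable
  have hXd : ∀ (τ : ℝ) (y : Fin N → ℝ),
      HasFDerivAt (X τ) ((fderiv ℝ F (τ, y)).comp C) y := by
    intro τ y
    have hin : HasFDerivAt (fun z : Fin N → ℝ => ((τ : ℝ), z)) C y :=
      (hasFDerivAt_const τ y).prodMk (hasFDerivAt_id y)
    exact (hF (τ, y)).hasFDerivAt.comp y hin
  have hfderiv : ∀ (τ : ℝ) (y : Fin N → ℝ),
      fderiv ℝ (X τ) y = (fderiv ℝ F (τ, y)).comp C := fun τ y => (hXd τ y).fderiv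
  -- the time partial derivative
  have h10 : ∀ (τ : ℝ) (y : Fin N → ℝ),
      fderiv ℝ F (τ, y) (1, (0 : Fin N → ℝ)) = Vt (X τ y) := by
    intro τ y
    have hin : HasDerivAt (fun u : ℝ => (u, y)) ((1 : ℝ), (0 : Fin N → ℝ)) τ :=
      (hasDerivAt_id τ).prodMk (hasDerivAt_const τ y)
    have h1 : HasDerivAt (fun u : ℝ => F (u, y))
        (fderiv ℝ F (τ, y) (1, (0 : Fin N → ℝ))) τ :=
      by have h := (hF (τ, y)).hasFDerivAt.comp_hasDerivAt τ hin; exact h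
    exact h1.unique (hXode τ y)
  -- chain rule identity : D_y X(τ, y) (Vt y) = Vt (X τ y)
  have key : ∀ (τ : ℝ) (y : Fin N → ℝ),
      fderiv ℝ F (τ, y) ((0 : ℝ), Vt y) = Vt (X τ y) := by
    intro τ y
    have h1 : HasDerivAt (fun s : ℝ => X (τ + s) y) (Vt (X τ y)) 0 := by
      have hshift : HasDerivAt (fun s : ℝ => τ + s) 1 0 := by
        simpa using (hasDerivAt_id (0:ℝ)).const_add τ
      have hout : HasDerivAt (fun u : ℝ => X u y) (Vt (X (τ + 0) y)) (τ + 0) :=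
        hXode (τ + 0) y
      have := hout.scomp 0 hshift
      simpa [Function.comp_def] using this
    have h2 : HasDerivAt (fun s : ℝ => X (τ + s) y)
        (fderiv ℝ F (τ, y) ((0 : ℝ), Vt y)) 0 := by
      have heq : (fun s : ℝ => X (τ + s) y) = fun s : ℝ => X τ (X s y) := by
        funext s; exact hXgroup s τ y
      rw [heq]
      have hXdy : HasFDerivAt (X τ) ((fderiv ℝ F (τ, y)).comp C) (X 0 y) := by
        rw [hX0]; exact hXd τ y
      have hinner : HasDerivAt (fun s : ℝ => X s y) (Vt y) 0 := by
        have h := hXode 0 y; rwa [hX0] at h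
      have h := hXdy.comp_hasDerivAt 0 hinner
      simpa [ContinuousLinearMap.comp_apply, hCapp, Function.comp_def] using h
    exact (h1.unique h2).symm
  -- the comparison curve
  set g : ℝ → (Fin N → ℝ) := fun s => X (t - s) (x s) with hgdef
  set f' : ℝ → (Fin N → ℝ) :=
    fun s => fderiv ℝ F (t - s, x s) ((0 : ℝ), V (x s) - Vt (x s)) with hf'def
  have hxcont : ContinuousOn x (Set.Icc 0 T) := fun s hs => (hx s hs).continuousWithinAt
  have hsubset : Set.Icc (0:ℝ) t ⊆ Set.Icc (0:ℝ) T := Set.Icc_subset_Icc le_rfl htT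
  -- derivative of g at interior points
  have hgderiv : ∀ s ∈ Set.Ioo (0 : ℝ) t, HasDerivAt g (f' s) s := by
    intro s hs
    have hsT : s ∈ Set.Icc (0:ℝ) T := ⟨hs.1.le, (hs.2.trans_le htT).le⟩
    have hxs : HasDerivAt x (V (x s)) s :=
      (hx s hsT).hasDerivAt (Icc_mem_nhds hs.1 (hs.2.trans_le htT))
    have hts : HasDerivAt (fun s : ℝ => t - s) (-1) s := by
      simpa [Pi.sub_def] using (hasDerivAt_const s t).sub (hasDerivAt_id s)
    have hu : HasDerivAt (fun s : ℝ => ((t - s : ℝ), x s)) ((-1 : ℝ), V (x s)) s :=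
      hts.prodMk hxs
    have hg1 : HasDerivAt g (fderiv ℝ F (t - s, x s) ((-1 : ℝ), V (x s))) s :=
      by have h := (hF (t - s, x s)).hasFDerivAt.comp_hasDerivAt s hu; exact h
    have harg : ((-1 : ℝ), V (x s))
        = ((0 : ℝ), V (x s) - Vt (x s))
          + (-((1:ℝ), (0 : Fin N → ℝ)) + ((0:ℝ), Vt (x s))) := by
      simp [Prod.ext_iff]
    have hval : fderiv ℝ F (t - s, x s) ((-1 : ℝ), V (x s)) = f' s := by
      rw [harg, map_add, map_add, map_neg, h10, key]
      simp [hf'def]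
    rwa [hval] at hg1
  -- continuity of g on [0, t]
  have hucont : ContinuousOn (fun s : ℝ => ((t - s : ℝ), x s)) (Set.Icc 0 t) :=
    (((continuous_const.sub continuous_id).continuousOn).prodMk (hxcont.mono hsubset))
  have hgcont : ContinuousOn g (Set.Icc 0 t) :=
    hF.continuous.comp_continuousOn hucont
  -- integrability of f'
  have hf'cont : ContinuousOn f' (Set.Icc 0 t) := by
    have h1 : ContinuousOn (fun s : ℝ => fderiv ℝ F (t - s, x s)) (Set.Icc 0 t) :=
      hFc.comp_continuousOn hucont
    have h2 : ContinuousOn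
        (fun s : ℝ => ((0 : ℝ), V (x s) - Vt (x s))) (Set.Icc 0 t) := by
      apply continuousOn_const.prodMk
      exact ((hV.comp_continuousOn (hxcont.mono hsubset)).sub
        (hVt.comp_continuousOn (hxcont.mono hsubset)))
    exact h1.clm_apply h2
  have hint : IntervalIntegrable f' MeasureTheory.volume 0 t := by
    apply ContinuousOn.intervalIntegrable
    rwa [Set.uIcc_of_le ht0]
  -- fundamental theorem of calculus
  have hFTC : ∫ s in (0:ℝ)..t, f' s = g t - g 0 := by
    apply intervalIntegral.integral_eq_sub_of_hasDeriv_right_of_le ht0 hgcont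
      (fun s hs => (hgderiv s hs).hasDerivWithinAt) hint
  have hgt : g t = x t := by simp [hgdef, hX0]
  have hg0 : g 0 = X t (x 0) := by simp [hgdef]
  have hcongr : ∀ s : ℝ,
      (fderiv ℝ (X (t - s)) (x s)) (V (x s) - Vt (x s)) = f' s := by
    intro s
    rw [hfderiv]
    rfl
  calc x t - X t (x 0) = g t - g 0 := by rw [hgt, hg0]
    _ = ∫ s in (0:ℝ)..t, f' s := hFTC.symm
    _ = ∫ s in (0:ℝ)..t, (fderiv ℝ (X (t - s)) (x s)) (V (x s) - Vt (x s)) := by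
        simp_rw [hcongr]
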